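/- If x ∈ K satisfies ⟨x - x*, Π_K(x, -∇_x L_A(x,v))⟩ + ⟨v - v*, Ax - b⟩ = 0 (i.e., the Lyapunov derivative vanishes) where (x*,v*) is a saddle point, then Ax = b and f(x) = f(x*); hence x is also an optimal solution. -/

import Mathlib

open scoped RealInnerProductSpace

lemma grad_ineq_aux {n : ℕ} {f : EuclideanSpace ℝ (Fin n) → ℝ} (hf : ConvexOn ℝ Set.univ f)
    {x gx : EuclideanSpace ℝ (Fin n)} (hg : HasGradientAt f gx x) (y : EuclideanSpace ℝ (Fin n)) :
    f x + ⟪gx, y - x⟫ ≤ f y := by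
  set φ : ℝ → ℝ := fun t => f (x + t • (y - x)) with hφ
  have hline : HasDerivAt (fun t : ℝ => x + t • (y - x)) (y - x) 0 := by
    simpa using ((hasDerivAt_id (0:ℝ)).smul_const (y - x)).const_add x
  have hFd : HasFDerivAt f (InnerProductSpace.toDual ℝ _ gx) x := hg
  have hφd : HasDerivAt φ ⟪gx, y - x⟫ 0 := by
    have hFd' : HasFDerivAt f (InnerProductSpace.toDual ℝ _ gx) (x + (0:ℝ) • (y - x)) := by
      simpa using hFd
    have := hFd'.comp_hasDerivAt (f := fun t : ℝ => x + t • (y - x)) (0:ℝ) (by simpa using hline)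
    simp only [InnerProductSpace.toDual_apply_apply] at this; exact this
  have hslope : Filter.Tendsto (slope φ 0) (nhdsWithin 0 (Set.Ioi 0)) (nhds ⟪gx, y - x⟫) :=
    (hasDerivAt_iff_tendsto_slope.mp hφd).mono_left
      (nhdsWithin_mono 0 (fun t ht => ne_of_gt ht))
  have hle : ⟪gx, y - x⟫ ≤ f y - f x := by
    refine le_of_tendsto hslope ?_
    filter_upwards [Ioo_mem_nhdsGT_of_mem (by norm_num : (0:ℝ) ∈ Set.Ico (0:ℝ) 1)] with t ht
    have ht0 : 0 < t := ht.1
    have hcomb : φ t ≤ (1 - t) * f x + t * f y := by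
      have := hf.2 (Set.mem_univ x) (Set.mem_univ y) (by linarith [ht.2] : (0:ℝ) ≤ 1 - t)
        (le_of_lt ht0) (by ring)
      have hx' : (1 - t) • x + t • y = x + t • (y - x) := by module
      simpa [hφ, hx'] using this
    have hsl : slope φ 0 t = (φ t - φ 0) / t := by simp [slope_def_field]
    rw [hsl]
    rw [div_le_iff₀ ht0]
    have hφ0 : φ 0 = f x := by simp [hφ]
    rw [hφ0]
    nlinarith [hcomb]
  linarith

lemma proj_key_aux {n : ℕ} (K : Set (EuclideanSpace ℝ (Fin n))) (hK : Convex ℝ K)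
    (xs : EuclideanSpace ℝ (Fin n)) (hxs : xs ∈ K)
    (x : EuclideanSpace ℝ (Fin n)) (hx : x ∈ K) (w p : EuclideanSpace ℝ (Fin n))
    (hpT : p ∈ closure {d | ∃ y ∈ K, ∃ l : ℝ, 0 ≤ l ∧ d = l • (y - x)})
    (hpmin : ∀ u ∈ closure {d | ∃ y ∈ K, ∃ l : ℝ, 0 ≤ l ∧ d = l • (y - x)},
      ‖w - p‖ ≤ ‖w - u‖) :
    ⟪x - xs, p⟫ ≤ ⟪x - xs, w⟫ := by
  set S : Set (EuclideanSpace ℝ (Fin n)) := {d | ∃ y ∈ K, ∃ l : ℝ, 0 ≤ l ∧ d = l • (y - x)}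
    with hSdef
  have hSconv : Convex ℝ S := by
    rintro d1 ⟨y1, hy1, l1, hl1, rfl⟩ d2 ⟨y2, hy2, l2, hl2, rfl⟩ a c ha hc hac
    rcases eq_or_lt_of_le (by positivity : (0:ℝ) ≤ a*l1 + c*l2) with h0 | h0
    · refine ⟨x, hx, 0, le_refl 0, ?_⟩
      have ha1 : a * l1 = 0 := by nlinarith [mul_nonneg ha hl1, mul_nonneg hc hl2]
      have hc1 : c * l2 = 0 := by nlinarith [mul_nonneg ha hl1, mul_nonneg hc hl2]
      rw [smul_smul, smul_smul, ha1, hc1]; simp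
    · refine ⟨(a*l1/(a*l1+c*l2)) • y1 + (c*l2/(a*l1+c*l2)) • y2,
        hK hy1 hy2 (by positivity) (by positivity) (by field_simp), a*l1+c*l2, le_of_lt h0, ?_⟩
      rw [smul_smul, smul_smul]
      match_scalars <;> field_simp <;> ring
  have hTconv : Convex ℝ (closure S) := hSconv.closure
  haveI : Nonempty (closure S) := ⟨⟨p, hpT⟩⟩
  have hinf : ‖w - p‖ = ⨅ u : closure S, ‖w - u‖ := by
    refine le_antisymm (le_ciInf fun u => hpmin u u.2) ?_
    exact ciInf_le ⟨0, fun _ ⟨_, h⟩ => h ▸ norm_nonneg _⟩ (⟨p, hpT⟩ : closure S)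
  have hproj := (norm_eq_iInf_iff_real_inner_le_zero hTconv hpT).mp hinf
  have h0T : (0 : EuclideanSpace ℝ (Fin n)) ∈ closure S :=
    subset_closure ⟨x, hx, 0, le_refl 0, by simp⟩
  have h2pT : (2:ℝ) • p ∈ closure S := by
    have hmap : (fun d : EuclideanSpace ℝ (Fin n) => (2:ℝ) • d) '' S ⊆ S := by
      rintro _ ⟨d, ⟨y, hy, l, hl, rfl⟩, rfl⟩
      exact ⟨y, hy, 2 * l, by positivity, by simp [smul_smul]⟩
    have : (2:ℝ) • p ∈ closure ((fun d : EuclideanSpace ℝ (Fin n) => (2:ℝ) • d) '' S) :=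
      image_closure_subset_closure_image (continuous_const_smul (2:ℝ)) ⟨p, hpT, rfl⟩
    exact closure_mono hmap this
  have hxsT : xs - x ∈ closure S := subset_closure ⟨xs, hxs, 1, zero_le_one, by simp⟩
  have hpp : ⟪w - p, p⟫ = 0 := by
    have h2 := hproj ((2:ℝ) • p) h2pT
    have h3 := hproj 0 h0T
    have e2 : (2:ℝ) • p - p = p := by module
    rw [e2] at h2
    rw [zero_sub, inner_neg_right] at h3
    linarith
  have h1 := hproj (xs - x) hxsT
  rw [inner_sub_right, hpp] at h1
  have hkey : (0:ℝ) ≤ ⟪x - xs, w - p⟫ := by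
    have e : x - xs = -(xs - x) := by abel
    rw [e, inner_neg_left, real_inner_comm]; linarith
  rw [inner_sub_right] at hkey; linarith

/-- If the Lyapunov derivative of the projected primal–dual gradient flow vanishes at
`(x, v)` with `x ∈ K`, where `(x*, v*)` is a saddle point of `L(x,v) = f(x) + ⟨v, Ax-b⟩`,
then `Ax = b` and `f(x) = f(x*)`; hence `x` is also an optimal solution. -/
theorem lyapunov_derivative_zero_implies_optimal (n m : ℕ)
    (K : Set (EuclideanSpace ℝ (Fin n))) (hKc : IsClosed K) (hK : Convex ℝ K)
    (f : EuclideanSpace ℝ (Fin n) → ℝ) (hf : ConvexOn ℝ Set.univ f)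
    (g : EuclideanSpace ℝ (Fin n) → EuclideanSpace ℝ (Fin n))
    (hg : ∀ x, HasGradientAt f (g x) x)
    (A : EuclideanSpace ℝ (Fin n) →L[ℝ] EuclideanSpace ℝ (Fin m))
    (b : EuclideanSpace ℝ (Fin m))
    (L : EuclideanSpace ℝ (Fin n) → EuclideanSpace ℝ (Fin m) → ℝ)
    (hL : ∀ x v, L x v = f x + ⟪v, A x - b⟫)
    (xs : EuclideanSpace ℝ (Fin n)) (vs : EuclideanSpace ℝ (Fin m)) (hxs : xs ∈ K)
    (hfeas : A xs = b)
    (hsaddle : ∀ x ∈ K, ∀ v, L xs v ≤ L xs vs ∧ L xs vs ≤ L x vs)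
    (x : EuclideanSpace ℝ (Fin n)) (hx : x ∈ K) (v : EuclideanSpace ℝ (Fin m))
    (p : EuclideanSpace ℝ (Fin n))
    -- `p = Π_K(x, -∇_x L_A(x,v))`, the metric projection onto the tangent cone `T_K(x)`
    (hpT : p ∈ closure {d | ∃ y ∈ K, ∃ l : ℝ, 0 ≤ l ∧ d = l • (y - x)})
    (hpmin : ∀ u ∈ closure {d | ∃ y ∈ K, ∃ l : ℝ, 0 ≤ l ∧ d = l • (y - x)},
      ‖(-(g x) - ContinuousLinearMap.adjoint A v
          - ContinuousLinearMap.adjoint A (A x - b)) - p‖ ≤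
        ‖(-(g x) - ContinuousLinearMap.adjoint A v
          - ContinuousLinearMap.adjoint A (A x - b)) - u‖)
    (hzero : ⟪x - xs, p⟫ + ⟪v - vs, A x - b⟫ = 0) :
    A x = b ∧ f x = f xs := by
  set w : EuclideanSpace ℝ (Fin n) :=
    -(g x) - ContinuousLinearMap.adjoint A v - ContinuousLinearMap.adjoint A (A x - b) with hw
  have hkey : ⟪x - xs, p⟫ ≤ ⟪x - xs, w⟫ :=
    proj_key_aux K hK xs hxs x hx w p hpT hpmin
  have hAxxs : A (x - xs) = A x - b := by rw [map_sub, hfeas]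
  have hwval : ⟪x - xs, w⟫ = -⟪g x, x - xs⟫ - ⟪v, A x - b⟫ - ‖A x - b‖^2 := by
    rw [hw, inner_sub_right, inner_sub_right, inner_neg_right,
      ContinuousLinearMap.adjoint_inner_right, ContinuousLinearMap.adjoint_inner_right,
      hAxxs, real_inner_comm (x - xs) (g x), real_inner_self_eq_norm_sq,
      real_inner_comm (A x - b) v]
  have hgrad : f x + ⟪g x, xs - x⟫ ≤ f xs := grad_ineq_aux hf (hg x) xs
  have hgrad' : -⟪g x, x - xs⟫ ≤ f xs - f x := by
    have e : xs - x = -(x - xs) := by abel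
    rw [e, inner_neg_right] at hgrad; linarith
  have hsad := (hsaddle x hx vs).2
  rw [hL, hL, hfeas] at hsad
  simp only [sub_self, inner_zero_right, add_zero] at hsad
  -- hsad : f xs ≤ f x + ⟪vs, A x - b⟫
  have hsplit : ⟪v - vs, A x - b⟫ = ⟪v, A x - b⟫ - ⟪vs, A x - b⟫ := inner_sub_left _ _ _
  have hchain : (0:ℝ) ≤ -‖A x - b‖^2 := by
    have h1 : (0:ℝ) ≤ ⟪x - xs, w⟫ + ⟪v - vs, A x - b⟫ := by linarith
    rw [hwval, hsplit] at h1
    linarith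
  have hAb : A x = b := by
    have h0 : ‖A x - b‖ = 0 := by nlinarith [norm_nonneg (A x - b)]
    exact sub_eq_zero.mp (norm_eq_zero.mp h0)
  refine ⟨hAb, ?_⟩
  have hz : A x - b = 0 := by rw [hAb, sub_self]
  have h2 : f xs ≤ f x := by
    have := hsad; rw [hz] at this; simpa using this
  have hp0 : ⟪x - xs, p⟫ = 0 := by
    have := hzero; rw [hz] at this; simpa using this
  have hw0 : ⟪x - xs, w⟫ = -⟪g x, x - xs⟫ := by
    rw [hwval, hz]; simp
  have h3 : f x ≤ f xs := by
    rw [hw0] at hkey; rw [hp0] at hkey; linarith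
  linarith
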